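/- Assume the input graph G is a similarity (respectively, dissimilarity) ground-truth input. Then, for any admissible objective function and regardless of the tie-breaking rule used, every tree output by the agglomerative heuristics average-linkage, single-linkage, and complete-linkage is an optimal solution; equivalently, every such output tree is a generating tree for G. -/

import Mathlib

open scoped BigOperators

attribute [local instance] Classical.propDecidable

noncomputable section

/-! ### Cluster trees -/

/-- A (binary, rooted) hierarchical-clustering tree whose leaves are labelled by
vertices of `V`. -/
inductive ClusterTree (V : Type) : Type where
  | leaf : V → ClusterTree V
  | node : ClusterTree V → ClusterTree V → ClusterTree V

namespace ClusterTree

variable {V : Type}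

/-- The list of leaf labels of the tree (left-to-right). -/
def leavesList : ClusterTree V → List V
  | leaf v => [v]
  | node L R => leavesList L ++ leavesList R

/-- The set of leaf labels of the tree. -/
def leaves [DecidableEq V] (T : ClusterTree V) : Finset V :=
  T.leavesList.toFinset

end ClusterTree

section Defs

variable {V : Type}

/-- `T` is a cluster tree for the whole (finite) vertex set `V`: its leaves are
pairwise distinct and exhaust the vertices. -/
def IsClusterTree [DecidableEq V] [Fintype V] (T : ClusterTree V) : Prop :=
  T.leavesList.Nodup ∧ T.leaves = Finset.univ

/-- `IsSubtreeOf s T` : `s` occurs as a rooted subtree of `T`. -/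
def IsSubtreeOf : ClusterTree V → ClusterTree V → Prop
  | s, ClusterTree.leaf v => s = ClusterTree.leaf v
  | s, ClusterTree.node L R => s = ClusterTree.node L R ∨ IsSubtreeOf s L ∨ IsSubtreeOf s R

/-- The subtree of `T` rooted at the lowest common ancestor of the leaves `x` and `y`. -/
def lcaSubtree [DecidableEq V] : ClusterTree V → V → V → ClusterTree V
  | ClusterTree.leaf v, _, _ => ClusterTree.leaf v
  | ClusterTree.node L R, x, y =>
    if x ∈ L.leaves ∧ y ∈ L.leaves then lcaSubtree L x y
    else if x ∈ R.leaves ∧ y ∈ R.leaves then lcaSubtree R x y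
    else ClusterTree.node L R

/-- `w(A, B) = ∑_{a ∈ A, b ∈ B} w a b`. -/
def cutWeight (w : V → V → ℝ) (A B : Finset V) : ℝ := ∑ a ∈ A, ∑ b ∈ B, w a b

/-- `w(A) = ∑_{a, b ∈ A} w a b` (ordered pairs; each edge counted twice). -/
def innerWeight (w : V → V → ℝ) (A : Finset V) : ℝ := ∑ a ∈ A, ∑ b ∈ A, w a b

/-- `∑_{e ∈ E} w(e)`, for a symmetric weight function with zero diagonal. -/
def totalWeight [Fintype V] (w : V → V → ℝ) : ℝ := (∑ u : V, ∑ v : V, w u v) / 2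

/-- Cost of a cluster tree: each internal node `N` with children `N₁, N₂`
contributes `w(V(N₁), V(N₂)) · g(|V(N₁)|, |V(N₂)|)`. -/
def treeCost [DecidableEq V] (w : V → V → ℝ) (g : ℕ → ℕ → ℝ) : ClusterTree V → ℝ
  | ClusterTree.leaf _ => 0
  | ClusterTree.node L R =>
      cutWeight w L.leaves R.leaves * g L.leaves.card R.leaves.card
        + treeCost w g L + treeCost w g R

/-- Dasgupta's cost (= `treeCost` with `g (a, b) = a + b`). -/
def dasguptaCost [DecidableEq V] (w : V → V → ℝ) : ClusterTree V → ℝ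
  | ClusterTree.leaf _ => 0
  | ClusterTree.node L R =>
      ((L.leaves.card + R.leaves.card : ℕ) : ℝ) * cutWeight w L.leaves R.leaves
        + dasguptaCost w L + dasguptaCost w R

/-! ### Generating trees -/

/-- `T` is a generating tree for the similarity graph `w` : there is a nonnegative
weight function on the internal nodes, non-increasing from leaves towards the root,
realizing every edge weight at the corresponding LCA. -/
def IsGenerating [DecidableEq V] (w : V → V → ℝ) (T : ClusterTree V) : Prop :=
  ∃ W : ClusterTree V → ℝ,
    (∀ s, IsSubtreeOf s T → 0 ≤ W s) ∧
    (∀ L R, IsSubtreeOf (ClusterTree.node L R) T →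
      ∀ s, IsSubtreeOf s L ∨ IsSubtreeOf s R → W (ClusterTree.node L R) ≤ W s) ∧
    (∀ x y, x ∈ T.leaves → y ∈ T.leaves → x ≠ y → w x y = W (lcaSubtree T x y))

/-- Generating tree in the dissimilarity setting (weights non-decreasing from
leaves towards the root). -/
def IsGeneratingDissim [DecidableEq V] (w : V → V → ℝ) (T : ClusterTree V) : Prop :=
  ∃ W : ClusterTree V → ℝ,
    (∀ s, IsSubtreeOf s T → 0 ≤ W s) ∧
    (∀ L R, IsSubtreeOf (ClusterTree.node L R) T →
      ∀ s, IsSubtreeOf s L ∨ IsSubtreeOf s R → W s ≤ W (ClusterTree.node L R)) ∧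
    (∀ x y, x ∈ T.leaves → y ∈ T.leaves → x ≠ y → w x y = W (lcaSubtree T x y))

/-- Strictly generating tree (similarity setting). -/
def IsStrictlyGenerating [DecidableEq V] (w : V → V → ℝ) (T : ClusterTree V) : Prop :=
  ∃ W : ClusterTree V → ℝ,
    (∀ s, IsSubtreeOf s T → 0 ≤ W s) ∧
    (∀ L R, IsSubtreeOf (ClusterTree.node L R) T →
      ∀ s, IsSubtreeOf s L ∨ IsSubtreeOf s R → W (ClusterTree.node L R) < W s) ∧
    (∀ x y, x ∈ T.leaves → y ∈ T.leaves → x ≠ y → w x y = W (lcaSubtree T x y))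

/-- Strictly generating tree (dissimilarity setting). -/
def IsStrictlyGeneratingDissim [DecidableEq V] (w : V → V → ℝ) (T : ClusterTree V) : Prop :=
  ∃ W : ClusterTree V → ℝ,
    (∀ s, IsSubtreeOf s T → 0 ≤ W s) ∧
    (∀ L R, IsSubtreeOf (ClusterTree.node L R) T →
      ∀ s, IsSubtreeOf s L ∨ IsSubtreeOf s R → W s < W (ClusterTree.node L R)) ∧
    (∀ x y, x ∈ T.leaves → y ∈ T.leaves → x ≠ y → w x y = W (lcaSubtree T x y))

/-! ### Ultrametrics and ground-truth inputs -/

/-- `d` is an ultrametric on `V`. -/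
def IsUltrametric (d : V → V → ℝ) : Prop :=
  (∀ x, d x x = 0) ∧ (∀ x y, d x y = 0 → x = y) ∧ (∀ x y, d x y = d y x) ∧
  (∀ x y, 0 ≤ d x y) ∧ (∀ x y z, d x y ≤ max (d x z) (d y z))

/-- `w` is a similarity graph generated from an ultrametric via a
non-increasing nonnegative function `f`. -/
def GeneratedFromUltrametric (w : V → V → ℝ) : Prop :=
  ∃ (d : V → V → ℝ) (f : ℝ → ℝ),
    IsUltrametric d ∧
    (∀ a b : ℝ, 0 ≤ a → a ≤ b → f b ≤ f a) ∧
    (∀ a : ℝ, 0 ≤ a → 0 ≤ f a) ∧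
    (∀ x y : V, x ≠ y → w x y = f (d x y))

/-- `w` is a dissimilarity graph generated from an ultrametric via a
non-decreasing nonnegative function `f`. -/
def GeneratedFromUltrametricDissim (w : V → V → ℝ) : Prop :=
  ∃ (d : V → V → ℝ) (f : ℝ → ℝ),
    IsUltrametric d ∧
    (∀ a b : ℝ, 0 ≤ a → a ≤ b → f a ≤ f b) ∧
    (∀ a : ℝ, 0 ≤ a → 0 ≤ f a) ∧
    (∀ x y : V, x ≠ y → w x y = f (d x y))

/-- `w` is a similarity graph generated from a *minimal* ultrametric:
pairs with equal weights are at equal ultrametric distance. -/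
def GeneratedFromMinimalUltrametric (w : V → V → ℝ) : Prop :=
  ∃ (d : V → V → ℝ) (f : ℝ → ℝ),
    IsUltrametric d ∧
    (∀ a b : ℝ, 0 ≤ a → a ≤ b → f b ≤ f a) ∧
    (∀ a : ℝ, 0 ≤ a → 0 ≤ f a) ∧
    (∀ x y : V, x ≠ y → w x y = f (d x y)) ∧
    (∀ u v u' v' : V, u ≠ v → u' ≠ v' → f (d u v) = f (d u' v') → d u v = d u' v')

/-- Dissimilarity analogue of `GeneratedFromMinimalUltrametric`. -/
def GeneratedFromMinimalUltrametricDissim (w : V → V → ℝ) : Prop :=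
  ∃ (d : V → V → ℝ) (f : ℝ → ℝ),
    IsUltrametric d ∧
    (∀ a b : ℝ, 0 ≤ a → a ≤ b → f a ≤ f b) ∧
    (∀ a : ℝ, 0 ≤ a → 0 ≤ f a) ∧
    (∀ x y : V, x ≠ y → w x y = f (d x y)) ∧
    (∀ u v u' v' : V, u ≠ v → u' ≠ v' → f (d u v) = f (d u' v') → d u v = d u' v')

/-- `w` is a `δ`-adversarially-perturbed (similarity) ground-truth input. -/
def IsDeltaPerturbedGroundTruth (w : V → V → ℝ) (δ : ℝ) : Prop :=
  ∃ (d : V → V → ℝ) (f : ℝ → ℝ),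
    IsUltrametric d ∧
    (∀ a b : ℝ, 0 ≤ a → a ≤ b → f b ≤ f a) ∧
    (∀ a : ℝ, 0 ≤ a → 0 ≤ f a) ∧
    (∀ x y : V, x ≠ y → f (d x y) ≤ w x y ∧ w x y ≤ δ * f (d x y))

end Defs

/-- The unit-weight clique on `V`. -/
def cliqueW (V : Type) [DecidableEq V] : V → V → ℝ := fun x y => if x = y then 0 else 1

/-- Admissibility of a cost function (similarity setting): on every similarity graph
generated from a minimal ultrametric, a cluster tree minimizes the cost
iff it is a generating tree. -/
def Admissible (g : ℕ → ℕ → ℝ) : Prop :=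
  ∀ (V : Type) [Fintype V] [DecidableEq V] (w : V → V → ℝ),
    GeneratedFromMinimalUltrametric w →
    ∀ T : ClusterTree V, IsClusterTree T →
      ((∀ T' : ClusterTree V, IsClusterTree T' → treeCost w g T ≤ treeCost w g T')
        ↔ IsGenerating w T)

/-- Admissibility of a value function (dissimilarity setting): on every dissimilarity
graph generated from a minimal ultrametric, a cluster tree maximizes the value
iff it is a generating tree. -/
def AdmissibleDissim (g : ℕ → ℕ → ℝ) : Prop :=
  ∀ (V : Type) [Fintype V] [DecidableEq V] (w : V → V → ℝ),
    GeneratedFromMinimalUltrametricDissim w →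
    ∀ T : ClusterTree V, IsClusterTree T →
      ((∀ T' : ClusterTree V, IsClusterTree T' → treeCost w g T' ≤ treeCost w g T)
        ↔ IsGeneratingDissim w T)

/-! ### Agglomerative (linkage) algorithms, modelled as a nondeterministic relation -/

/-- The initial state of an agglomerative algorithm: all singleton trees. -/
def initState (V : Type) [Fintype V] : Multiset (ClusterTree V) :=
  Finset.univ.val.map ClusterTree.leaf

/-- One merge step of a generic linkage algorithm: merge two candidate trees whose
leaf-set distance `D` is best (w.r.t. `better a b` = "`a` is at least as good as `b`")
among all candidate pairs; any tie-breaking choice is allowed. -/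
inductive MergeStep {V : Type} [DecidableEq V] (D : Finset V → Finset V → ℝ)
    (better : ℝ → ℝ → Prop) :
    Multiset (ClusterTree V) → Multiset (ClusterTree V) → Prop where
  | step : ∀ (rest : Multiset (ClusterTree V)) (T1 T2 : ClusterTree V),
      (∀ (T1' T2' : ClusterTree V) (rest' : Multiset (ClusterTree V)),
          T1 ::ₘ T2 ::ₘ rest = T1' ::ₘ T2' ::ₘ rest' →
          better (D T1.leaves T2.leaves) (D T1'.leaves T2'.leaves)) →
      MergeStep D better (T1 ::ₘ T2 ::ₘ rest) (ClusterTree.node T1 T2 ::ₘ rest)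

/-- `T` is a possible output of the linkage algorithm with dissimilarity/similarity
measure `D` and preference `better`. -/
def IsLinkageOutput {V : Type} [Fintype V] [DecidableEq V]
    (D : Finset V → Finset V → ℝ) (better : ℝ → ℝ → Prop) (T : ClusterTree V) : Prop :=
  Relation.ReflTransGen (MergeStep D better) (initState V) {T}

/-- Average-linkage measure. -/
def avgDist {V : Type} (w : V → V → ℝ) (A B : Finset V) : ℝ :=
  cutWeight w A B / ((A.card : ℝ) * (B.card : ℝ))

/-- Single-linkage measure: `min_{x ∈ A, y ∈ B} w x y`. -/
def minLinkDist {V : Type} [DecidableEq V] (w : V → V → ℝ) (A B : Finset V) : ℝ :=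
  WithTop.untopD 0 (((A ×ˢ B).image fun p => w p.1 p.2).min)

/-- Complete-linkage measure: `max_{x ∈ A, y ∈ B} w x y`. -/
def maxLinkDist {V : Type} [DecidableEq V] (w : V → V → ℝ) (A B : Finset V) : ℝ :=
  WithBot.unbotD 0 (((A ×ˢ B).image fun p => w p.1 p.2).max)

/-! ### Cuts -/

section Cuts

variable {V : Type}

/-- `A ⊕ x` : add `x` to `A` if absent, remove it if present. -/
def symmDiffV [DecidableEq V] (A : Finset V) (x : V) : Finset V :=
  if x ∈ A then A.erase x else insert x A

/-- `(A, B)` is an `ε/|A ∪ B|`-locally-densest cut of the induced subgraph on `A ∪ B`. -/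
def IsLocallyDensestCut [DecidableEq V] (w : V → V → ℝ) (ε : ℝ) (A B : Finset V) : Prop :=
  ∀ x ∈ A ∪ B,
    cutWeight w (symmDiffV A x) (symmDiffV B x) /
        (((symmDiffV A x).card : ℝ) * ((symmDiffV B x).card : ℝ)) ≤
      (1 + ε / ((A ∪ B).card : ℝ)) *
        (cutWeight w A B / ((A.card : ℝ) * (B.card : ℝ)))

/-- Cluster trees obtained by recursively splitting along `ε/n`-locally-densest cuts. -/
def IsRecLocallyDensestCutTree [DecidableEq V] (w : V → V → ℝ) (ε : ℝ) :
    ClusterTree V → Prop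
  | ClusterTree.leaf _ => True
  | ClusterTree.node L R =>
      IsLocallyDensestCut w ε L.leaves R.leaves ∧
      IsRecLocallyDensestCutTree w ε L ∧ IsRecLocallyDensestCutTree w ε R

/-- Cluster trees obtained by recursively splitting along `φ`-approximate sparsest cuts. -/
def IsRecApproxSparsestCutTree [DecidableEq V] (w : V → V → ℝ) (φ : ℝ) :
    ClusterTree V → Prop
  | ClusterTree.leaf _ => True
  | ClusterTree.node L R =>
      (∀ S : Finset V, S ⊆ L.leaves ∪ R.leaves → S.Nonempty → S ⊂ L.leaves ∪ R.leaves →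
        cutWeight w L.leaves R.leaves / ((L.leaves.card : ℝ) * (R.leaves.card : ℝ)) ≤
          φ * (cutWeight w S ((L.leaves ∪ R.leaves) \ S) /
            ((S.card : ℝ) * (((L.leaves ∪ R.leaves) \ S).card : ℝ)))) ∧
      IsRecApproxSparsestCutTree w φ L ∧ IsRecApproxSparsestCutTree w φ R

/-- Cluster trees obtained by recursively splitting along exact sparsest cuts. -/
def IsRecSparsestCutTree [DecidableEq V] (w : V → V → ℝ) : ClusterTree V → Prop
  | ClusterTree.leaf _ => True
  | ClusterTree.node L R =>
      (∀ S : Finset V, S ⊆ L.leaves ∪ R.leaves → S.Nonempty → S ⊂ L.leaves ∪ R.leaves →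
        cutWeight w L.leaves R.leaves / ((L.leaves.card : ℝ) * (R.leaves.card : ℝ)) ≤
          cutWeight w S ((L.leaves ∪ R.leaves) \ S) /
            ((S.card : ℝ) * (((L.leaves ∪ R.leaves) \ S).card : ℝ))) ∧
      IsRecSparsestCutTree w L ∧ IsRecSparsestCutTree w R

/-- Cluster trees obtained by recursively splitting along exact densest cuts. -/
def IsRecDensestCutTree [DecidableEq V] (w : V → V → ℝ) : ClusterTree V → Prop
  | ClusterTree.leaf _ => True
  | ClusterTree.node L R =>
      (∀ S : Finset V, S ⊆ L.leaves ∪ R.leaves → S.Nonempty → S ⊂ L.leaves ∪ R.leaves →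
        cutWeight w S ((L.leaves ∪ R.leaves) \ S) /
            ((S.card : ℝ) * (((L.leaves ∪ R.leaves) \ S).card : ℝ)) ≤
          cutWeight w L.leaves R.leaves / ((L.leaves.card : ℝ) * (R.leaves.card : ℝ))) ∧
      IsRecDensestCutTree w L ∧ IsRecDensestCutTree w R

/-- Cluster trees produced by the bisection 2-Center algorithm (similarity setting). -/
def IsBisection2CenterTree [DecidableEq V] (w : V → V → ℝ) : ClusterTree V → Prop
  | ClusterTree.leaf _ => True
  | ClusterTree.node L R =>
      (∃ u ∈ L.leaves ∪ R.leaves, ∃ v ∈ L.leaves ∪ R.leaves, u ≠ v ∧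
        (∃ r : ℝ,
          (∀ x ∈ L.leaves ∪ R.leaves, r ≤ max (w x u) (w x v)) ∧
          (∀ u' ∈ L.leaves ∪ R.leaves, ∀ v' ∈ L.leaves ∪ R.leaves, u' ≠ v' →
            ∃ x ∈ L.leaves ∪ R.leaves, max (w x u') (w x v') ≤ r)) ∧
        L.leaves = (L.leaves ∪ R.leaves).filter fun x => w x v ≤ w x u) ∧
      IsBisection2CenterTree w L ∧ IsBisection2CenterTree w R

/-- Cluster trees produced by the bisection 2-Center algorithm (dissimilarity setting). -/
def IsBisection2CenterTreeDissim [DecidableEq V] (w : V → V → ℝ) : ClusterTree V → Prop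
  | ClusterTree.leaf _ => True
  | ClusterTree.node L R =>
      (∃ u ∈ L.leaves ∪ R.leaves, ∃ v ∈ L.leaves ∪ R.leaves, u ≠ v ∧
        (∃ r : ℝ,
          (∀ x ∈ L.leaves ∪ R.leaves, min (w x u) (w x v) ≤ r) ∧
          (∀ u' ∈ L.leaves ∪ R.leaves, ∀ v' ∈ L.leaves ∪ R.leaves, u' ≠ v' →
            ∃ x ∈ L.leaves ∪ R.leaves, r ≤ min (w x u') (w x v'))) ∧
        L.leaves = (L.leaves ∪ R.leaves).filter fun x => w x u ≤ w x v) ∧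
      IsBisection2CenterTreeDissim w L ∧ IsBisection2CenterTreeDissim w R

end Cuts

/-! ### Pivot algorithms -/

mutual
/-- Trees produced by the fast pivot algorithm (Algorithm 6 of CKMM):
pick a pivot `p`, split the other vertices into classes of equal similarity to `p`
(in strictly decreasing order of similarity), recurse, and attach along a spine. -/
inductive IsPivotTree {V : Type} [DecidableEq V] (w : V → V → ℝ) : ClusterTree V → Prop where
  | mk : ∀ (p : V) (T : ClusterTree V), PivotSpine w p T → IsPivotTree w T

/-- The spine of the pivot algorithm: `PivotSpine w p T` says that `T` is an iterated
union of the single-vertex tree on `p` with pivot trees of the similarity classes of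
`p`, attached in strictly decreasing order of similarity to `p`. -/
inductive PivotSpine {V : Type} [DecidableEq V] (w : V → V → ℝ) : V → ClusterTree V → Prop where
  | base : ∀ p : V, PivotSpine w p (ClusterTree.leaf p)
  | step : ∀ (p : V) (S T : ClusterTree V) (c : ℝ),
      PivotSpine w p S → IsPivotTree w T →
      (∀ v ∈ T.leaves, w p v = c) →
      (∀ u ∈ S.leaves, u ≠ p → c < w p u) →
      PivotSpine w p (ClusterTree.node S T)
end

mutual
/-- Trees produced by the robust pivot algorithm (Algorithm 7 of CKMM). -/
inductive IsRobustPivotTree {V : Type} [DecidableEq V] (w : V → V → ℝ) :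
    ClusterTree V → Prop where
  | mk : ∀ (p : V) (T : ClusterTree V), RobustPivotSpine w T.leaves p T →
      IsRobustPivotTree w T

/-- `RobustPivotSpine w U p T` : `T` is a prefix (a spine) of a run of the robust pivot
algorithm on the vertex set `U`, started at the pivot `p`.  At each step, `wi` is the
maximum weight of an edge in the cut `(Ṽ, U \ Ṽ)` (where `Ṽ` is the set of already
clustered vertices), and the next block is the least subset of `U \ Ṽ` closed under
adding any vertex having an edge of weight at least `wi` into the block or into `Ṽ`. -/
inductive RobustPivotSpine {V : Type} [DecidableEq V] (w : V → V → ℝ) :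
    Finset V → V → ClusterTree V → Prop where
  | base : ∀ (U : Finset V) (p : V), RobustPivotSpine w U p (ClusterTree.leaf p)
  | step : ∀ (U : Finset V) (p : V) (S T : ClusterTree V) (wi : ℝ),
      RobustPivotSpine w U p S →
      IsRobustPivotTree w T →
      (∃ p1 ∈ S.leaves, ∃ p2 ∈ U \ S.leaves, w p1 p2 = wi) →
      (∀ q1 ∈ S.leaves, ∀ q2 ∈ U \ S.leaves, w q1 q2 ≤ wi) →
      T.leaves ⊆ U \ S.leaves →
      (∀ u ∈ U \ S.leaves, (∃ v ∈ T.leaves ∪ S.leaves, wi ≤ w u v) → u ∈ T.leaves) →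
      (∀ C : Finset V, C ⊆ U \ S.leaves →
        (∀ u ∈ U \ S.leaves, (∃ v ∈ C ∪ S.leaves, wi ≤ w u v) → u ∈ C) →
        T.leaves ⊆ C) →
      RobustPivotSpine w U p (ClusterTree.node S T)
end

/-! ### Paths and caterpillars -/

/-- Attach the leaves from the list `l` one by one on top of `t` (a "spine"). -/
def spineTree {V : Type} : ClusterTree V → List V → ClusterTree V
  | t, [] => t
  | t, v :: vs => spineTree (ClusterTree.node t (ClusterTree.leaf v)) vs

/-- The unit-weight path on `n` vertices. -/
def pathW (n : ℕ) (i j : Fin n) : ℝ :=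
  if (i : ℕ) + 1 = (j : ℕ) ∨ (j : ℕ) + 1 = (i : ℕ) then 1 else 0

/-! ### Random graphs: hierarchical stochastic block model -/

/-- Index set for the potential edges of a graph on `Fin n`. -/
abbrev EdgeIdx (n : ℕ) := {p : Fin n × Fin n // p.1 < p.2}

/-- The (0/1) weight function of the random graph described by the edge
configuration `c`. -/
def configW {n : ℕ} (c : EdgeIdx n → Bool) (u v : Fin n) : ℝ :=
  if h : u < v then (if c ⟨(u, v), h⟩ then 1 else 0)
  else if h' : v < u then (if c ⟨(v, u), h'⟩ then 1 else 0)
  else 0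

/-- The probability of the edge configuration `c` when each edge `e` is present
independently with probability `q e`. -/
def configProb {n : ℕ} (q : Fin n → Fin n → ℝ) (c : EdgeIdx n → Bool) : ℝ :=
  ∏ e : EdgeIdx n, if c e then q e.val.1 e.val.2 else 1 - q e.val.1 e.val.2

/-- The expected cost `E[Γ(T) | ψ]` of a fixed cluster tree `T`, over the random
choice of the edges (with edge probabilities `q`). -/
def expectedCost {n : ℕ} (g : ℕ → ℕ → ℝ) (q : Fin n → Fin n → ℝ)
    (T : ClusterTree (Fin n)) : ℝ :=
  ∑ c : EdgeIdx n → Bool, configProb q c * treeCost (configW c) g T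

/-- The (fixed, size-independent) data of a hierarchical stochastic block model with
`k` bottom-level clusters: a generating tree `Ttil` with weights `Wtil` in `(0,1)`
(the graph `G̃ₖ` on `k` vertices generated from an ultrametric), and intra-cluster
probabilities `p i ∈ (0,1]` exceeding the weight of the parent of leaf `i`. -/
structure HSBM (k : ℕ) where
  Ttil : ClusterTree (Fin k)
  Wtil : ClusterTree (Fin k) → ℝ
  p : Fin k → ℝ
  ttil_isClusterTree : IsClusterTree Ttil
  wtil_pos : ∀ L R, IsSubtreeOf (ClusterTree.node L R) Ttil →
    0 < Wtil (ClusterTree.node L R)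
  wtil_lt_one : ∀ L R, IsSubtreeOf (ClusterTree.node L R) Ttil →
    Wtil (ClusterTree.node L R) < 1
  wtil_mono : ∀ L R, IsSubtreeOf (ClusterTree.node L R) Ttil →
    ∀ s, IsSubtreeOf s L ∨ IsSubtreeOf s R → Wtil (ClusterTree.node L R) ≤ Wtil s
  p_pos : ∀ i, 0 < p i
  p_le_one : ∀ i, p i ≤ 1
  p_gt_parent : ∀ L R, IsSubtreeOf (ClusterTree.node L R) Ttil →
    ∀ i : Fin k, L = ClusterTree.leaf i ∨ R = ClusterTree.leaf i →
      Wtil (ClusterTree.node L R) < p i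

/-- The edge probabilities of the HSBM `M` with sparsity `α`, given the assignment
`ψ` of vertices to bottom-level clusters.  These are also the edge weights of the
expected graph `Ḡ`. -/
def HSBM.edgeProb {k : ℕ} (M : HSBM k) (α : ℝ) {n : ℕ} (ψ : Fin n → Fin k) :
    Fin n → Fin n → ℝ := fun u v =>
  if ψ u = ψ v then α * M.p (ψ u)
  else α * M.Wtil (lcaSubtree M.Ttil (ψ u) (ψ v))

/-- The probability of the sample `ω = (ψ, c)` (labels and edges) of the HSBM `M`
with label proportions `f` and sparsity `α`. -/
def hsbmProb {k : ℕ} (M : HSBM k) (f : Fin k → ℝ) (α : ℝ) {n : ℕ}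
    (ω : (Fin n → Fin k) × (EdgeIdx n → Bool)) : ℝ :=
  (∏ v : Fin n, f (ω.1 v)) * configProb (M.edgeProb α ω.1) ω.2

/-- The common cost `κ(n)` of all cluster trees of the unit-weight clique on `n`
vertices (computed on the caterpillar tree). -/
def cliqueTreeCost (g : ℕ → ℕ → ℝ) (n : ℕ) : ℝ :=
  ∑ i ∈ Finset.range n, (i : ℝ) * g i 1

/-- The smoothness property: `max {g(n₁,n₂) : n₁+n₂ = n} = O(κ(n)/n²)`. -/
def SmoothCost (g : ℕ → ℕ → ℝ) : Prop :=
  ∃ C : ℝ, 0 < C ∧ ∀ n1 n2 : ℕ, 1 ≤ n1 → 1 ≤ n2 →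
    g n1 n2 * (((n1 + n2 : ℕ) : ℝ)) ^ 2 ≤ C * cliqueTreeCost g (n1 + n2)

end

/-! ### Auxiliary machinery for Statement 10 -/

noncomputable section Statement10Aux

namespace Statement10Aux

variable {V : Type}

lemma leavesList_ne_nil : ∀ t : ClusterTree V, t.leavesList ≠ [] := by
  intro t
  induction t with
  | leaf v => simp [ClusterTree.leavesList]
  | node L R ihL ihR =>
      simp only [ClusterTree.leavesList, ne_eq, List.append_eq_nil_iff]
      exact fun h => ihL h.1

lemma mem_leaves_iff [DecidableEq V] (t : ClusterTree V) (x : V) :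
    x ∈ t.leaves ↔ x ∈ t.leavesList := List.mem_toFinset

lemma leaves_nonempty [DecidableEq V] (t : ClusterTree V) : t.leaves.Nonempty := by
  obtain ⟨v, hv⟩ := List.exists_mem_of_ne_nil _ (leavesList_ne_nil t)
  exact ⟨v, (mem_leaves_iff t v).2 hv⟩

lemma leaves_node [DecidableEq V] (L R : ClusterTree V) :
    (ClusterTree.node L R).leaves = L.leaves ∪ R.leaves := by
  simp [ClusterTree.leaves, ClusterTree.leavesList, List.toFinset_append]

lemma subtree_refl : ∀ t : ClusterTree V, IsSubtreeOf t t := by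
  intro t
  cases t with
  | leaf v => exact rfl
  | node L R => exact Or.inl rfl

lemma subtree_trans : ∀ {a b c : ClusterTree V},
    IsSubtreeOf a b → IsSubtreeOf b c → IsSubtreeOf a c := by
  intro a b c
  induction c with
  | leaf v => intro hab hbc; rw [show b = ClusterTree.leaf v from hbc] at hab; exact hab
  | node L R ihL ihR =>
      intro hab hbc
      rcases hbc with h | h | h
      · rw [h] at hab; exact hab
      · exact Or.inr (Or.inl (ihL hab h))
      · exact Or.inr (Or.inr (ihR hab h))

lemma subtree_leaves_subset [DecidableEq V] : ∀ {s t : ClusterTree V},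
    IsSubtreeOf s t → s.leaves ⊆ t.leaves := by
  intro s t
  induction t with
  | leaf v => intro h; rw [show s = ClusterTree.leaf v from h]
  | node L R ihL ihR =>
      intro h
      rcases h with h | h | h
      · rw [h]
      · rw [leaves_node]; exact (ihL h).trans Finset.subset_union_left
      · rw [leaves_node]; exact (ihR h).trans Finset.subset_union_right

lemma lca_isSubtree [DecidableEq V] : ∀ (t : ClusterTree V) (x y : V),
    IsSubtreeOf (lcaSubtree t x y) t := by
  intro t
  induction t with
  | leaf v => intro x y; exact rfl
  | node L R ihL ihR =>
      intro x y
      show IsSubtreeOf (if _ then _ else if _ then _ else _) _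
      split
      · exact Or.inr (Or.inl (ihL x y))
      · split
        · exact Or.inr (Or.inr (ihR x y))
        · exact Or.inl rfl

lemma exists_list_max (le : ℝ → ℝ → Prop) (htot : ∀ a b, le a b ∨ le b a)
    (htr : ∀ a b c, le a b → le b c → le a c) :
    ∀ l : List ℝ, l ≠ [] → ∃ m ∈ l, ∀ x ∈ l, le x m := by
  intro l
  induction l with
  | nil => simp
  | cons a l ih =>
      intro _
      have haa : le a a := by rcases htot a a with h | h <;> exact h
      by_cases hl : l = []
      · subst hl
        exact ⟨a, List.mem_cons_self, by
          intro x hx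
          rcases List.mem_cons.1 hx with rfl | hx
          · exact haa
          · simp at hx⟩
      · obtain ⟨m, hm, hmax⟩ := ih hl
        rcases htot a m with h | h
        · refine ⟨m, List.mem_cons_of_mem _ hm, ?_⟩
          intro x hx
          rcases List.mem_cons.1 hx with rfl | hx
          · exact h
          · exact hmax x hx
        · refine ⟨a, List.mem_cons_self, ?_⟩
          intro x hx
          rcases List.mem_cons.1 hx with rfl | hx
          · exact haa
          · exact htr x m a (hmax x hx) h

section Main

variable [Fintype V] [DecidableEq V]

/-- A cluster is clean: all its vertices look alike from outside. -/
def CleanT (w : V → V → ℝ) (t : ClusterTree V) : Prop :=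
  ∀ x ∈ t.leaves, ∀ y ∈ t.leaves, ∀ z, z ∉ t.leaves → w x z = w y z

/-- A good generating weight assignment for a tree in the current collection. -/
def GoodW (w : V → V → ℝ) (le : ℝ → ℝ → Prop) (t : ClusterTree V)
    (W : ClusterTree V → ℝ) : Prop :=
  (∀ s, IsSubtreeOf s t → 0 ≤ W s) ∧
  (∀ L R, IsSubtreeOf (ClusterTree.node L R) t →
      ∀ s, IsSubtreeOf s L ∨ IsSubtreeOf s R → le (W (ClusterTree.node L R)) (W s)) ∧
  (∀ x y, x ∈ t.leaves → y ∈ t.leaves → x ≠ y → w x y = W (lcaSubtree t x y)) ∧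
  (∀ s, IsSubtreeOf s t → ∀ x ∈ t.leaves, ∀ z, z ∉ t.leaves → le (w x z) (W s))

/-- The invariant maintained by linkage algorithms. -/
def LinkInv (w : V → V → ℝ) (le : ℝ → ℝ → Prop) (S : Multiset (ClusterTree V)) : Prop :=
  S.bind (fun t => (t.leavesList : Multiset V)) = Finset.univ.val ∧
  (∀ t ∈ S, CleanT w t) ∧
  (∀ t ∈ S, ∃ W, GoodW w le t W)

lemma exists_topW (w : V → V → ℝ) (le : ℝ → ℝ → Prop)
    (htot : ∀ a b, le a b ∨ le b a) (htr : ∀ a b c, le a b → le b c → le a c)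
    (hnn : ∀ x y : V, x ≠ y → 0 ≤ w x y) :
    ∃ M : ℝ, 0 ≤ M ∧ ∀ a b : V, a ≠ b → le (w a b) M := by
  classical
  set l : List ℝ :=
    (((Finset.univ : Finset (V × V)).filter fun p => p.1 ≠ p.2).toList.map
      fun p => w p.1 p.2) with hl
  have hmem : ∀ a b : V, a ≠ b → w a b ∈ l := by
    intro a b hab
    rw [hl]
    refine List.mem_map.2 ⟨(a, b), ?_, rfl⟩
    rw [Finset.mem_toList, Finset.mem_filter]
    exact ⟨Finset.mem_univ _, hab⟩
  by_cases h0 : l = []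
  · refine ⟨0, le_rfl, ?_⟩
    intro a b hab
    exact absurd (hmem a b hab) (by rw [h0]; simp)
  · obtain ⟨m, hm, hmax⟩ := exists_list_max le htot htr l h0
    obtain ⟨p, hp, rfl⟩ := List.mem_map.1 (hl ▸ hm)
    rw [Finset.mem_toList, Finset.mem_filter] at hp
    exact ⟨w p.1 p.2, hnn _ _ hp.2, fun a b hab => hmax _ (hmem a b hab)⟩

lemma linkInv_init (w : V → V → ℝ) (le : ℝ → ℝ → Prop)
    (htot : ∀ a b, le a b ∨ le b a) (htr : ∀ a b c, le a b → le b c → le a c)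
    (hnn : ∀ x y : V, x ≠ y → 0 ≤ w x y) :
    LinkInv w le (initState V) := by
  obtain ⟨M, hM0, hM⟩ := exists_topW w le htot htr hnn
  have hleaf : ∀ t ∈ initState V, ∃ v : V, t = ClusterTree.leaf v := by
    intro t ht
    obtain ⟨v, _, rfl⟩ := Multiset.mem_map.1 ht
    exact ⟨v, rfl⟩
  refine ⟨?_, ?_, ?_⟩
  · show ((Finset.univ.val.map ClusterTree.leaf).bind
      fun t => ((t.leavesList : List V) : Multiset V)) = Finset.univ.val
    rw [Multiset.bind_map]
    have hb : ∀ s : Multiset V, (s.bind fun a => ({a} : Multiset V)) = s := fun s =>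
      Multiset.induction_on s (by simp) (by intro a s ih; simp [ih])
    simpa [ClusterTree.leavesList] using hb Finset.univ.val
  · intro t ht
    obtain ⟨v, rfl⟩ := hleaf t ht
    intro x hx y hy z hz
    rw [mem_leaves_iff] at hx hy
    simp [ClusterTree.leavesList] at hx hy
    rw [hx, hy]
  · intro t ht
    obtain ⟨v, rfl⟩ := hleaf t ht
    refine ⟨fun _ => M, fun s _ => hM0, ?_, ?_, ?_⟩
    · intro L R hLR s _
      exact absurd hLR (by intro h; cases h)
    · intro x y hx hy hxy
      rw [mem_leaves_iff] at hx hy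
      simp [ClusterTree.leavesList] at hx hy
      exact absurd (hx.trans hy.symm) hxy
    · intro s _ x hx z hz
      rw [mem_leaves_iff] at hx
      simp [ClusterTree.leavesList] at hx
      subst hx
      refine hM x z fun h => hz ?_
      rw [mem_leaves_iff]
      simp [ClusterTree.leavesList, h]

end Main

section Main2

variable [Fintype V] [DecidableEq V]

lemma linkInv_step (w : V → V → ℝ) (le : ℝ → ℝ → Prop)
    (hsymm : ∀ x y : V, x ≠ y → w x y = w y x) (hnn : ∀ x y : V, x ≠ y → 0 ≤ w x y)
    (hkey : ∀ x y z : V, x ≠ y → x ≠ z → y ≠ z →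
      le (w x z) (w x y) → le (w y z) (w x y) → w x z = w y z)
    (D : Finset V → Finset V → ℝ)
    (hD : ∀ A B : Finset V, Disjoint A B → A.Nonempty → B.Nonempty →
      ∀ c : ℝ, (∀ x ∈ A, ∀ y ∈ B, w x y = c) → D A B = c)
    {S S' : Multiset (ClusterTree V)}
    (hstep : MergeStep D (fun a b => le b a) S S') (hinv : LinkInv w le S) :
    LinkInv w le S' := by
  classical
  cases hstep with
  | step rest T1 T2 hbest =>
  obtain ⟨h1, h2, h3⟩ := hinv
  -- membership facts
  have hm1 : T1 ∈ (T1 ::ₘ T2 ::ₘ rest) := Multiset.mem_cons_self _ _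
  have hm2 : T2 ∈ (T1 ::ₘ T2 ::ₘ rest) :=
    Multiset.mem_cons_of_mem (Multiset.mem_cons_self _ _)
  have hmr : ∀ t ∈ rest, t ∈ (T1 ::ₘ T2 ::ₘ rest) := fun t ht =>
    Multiset.mem_cons_of_mem (Multiset.mem_cons_of_mem ht)
  -- nodup / disjointness facts
  have hnd : (((T1 ::ₘ T2 ::ₘ rest).bind fun t => ((t.leavesList : List V) : Multiset V))).Nodup := by
    rw [h1]; exact Finset.univ.nodup
  rw [Multiset.cons_bind, Multiset.cons_bind, Multiset.nodup_add] at hnd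
  obtain ⟨hndT1, hnd2, hdisj1⟩ := hnd
  rw [Multiset.nodup_add] at hnd2
  obtain ⟨hndT2, hndrest, hdisj2⟩ := hnd2
  have hd12 : ∀ x, x ∈ T1.leaves → x ∉ T2.leaves := by
    intro x hx hx2
    rw [mem_leaves_iff] at hx hx2
    exact Multiset.disjoint_left.1 hdisj1 (Multiset.mem_coe.2 hx)
      (Multiset.mem_add.2 (Or.inl (Multiset.mem_coe.2 hx2)))
  have hd21 : ∀ x, x ∈ T2.leaves → x ∉ T1.leaves := fun x hx h => hd12 x h hx
  have hd1r : ∀ t ∈ rest, ∀ x, x ∈ T1.leaves → x ∉ t.leaves := by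
    intro t ht x hx hxt
    rw [mem_leaves_iff] at hx hxt
    refine Multiset.disjoint_left.1 hdisj1 (Multiset.mem_coe.2 hx) (Multiset.mem_add.2 (Or.inr ?_))
    exact Multiset.mem_bind.2 ⟨t, ht, Multiset.mem_coe.2 hxt⟩
  have hd2r : ∀ t ∈ rest, ∀ x, x ∈ T2.leaves → x ∉ t.leaves := by
    intro t ht x hx hxt
    rw [mem_leaves_iff] at hx hxt
    exact Multiset.disjoint_left.1 hdisj2 (Multiset.mem_coe.2 hx)
      (Multiset.mem_bind.2 ⟨t, ht, Multiset.mem_coe.2 hxt⟩)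
  -- coverage
  have hcover : ∀ z : V, z ∉ T1.leaves → z ∉ T2.leaves → ∃ t ∈ rest, z ∈ t.leaves := by
    intro z hz1 hz2
    have hz : z ∈ ((T1 ::ₘ T2 ::ₘ rest).bind fun t => ((t.leavesList : List V) : Multiset V)) := by
      rw [h1]; exact Finset.mem_val.mpr (Finset.mem_univ z)
    obtain ⟨t, ht, hzt⟩ := Multiset.mem_bind.1 hz
    have hzt' : z ∈ t.leaves := (mem_leaves_iff t z).2 (Multiset.mem_coe.1 hzt)
    rcases Multiset.mem_cons.1 ht with rfl | ht
    · exact absurd hzt' hz1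
    rcases Multiset.mem_cons.1 ht with rfl | ht
    · exact absurd hzt' hz2
    · exact ⟨t, ht, hzt'⟩
  obtain ⟨x0, hx0⟩ := leaves_nonempty T1
  obtain ⟨y0, hy0⟩ := leaves_nonempty T2
  -- cross-constancy between two disjoint clean trees
  have hcc : ∀ (A B : ClusterTree V), CleanT w A → CleanT w B →
      (∀ x, x ∈ A.leaves → x ∉ B.leaves) →
      ∀ x ∈ A.leaves, ∀ y ∈ B.leaves, ∀ x' ∈ A.leaves, ∀ y' ∈ B.leaves,
        w x y = w x' y' := by
    intro A B hA hB hdis x hx y hy x' hx' y' hy'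
    have hyA : y ∉ A.leaves := fun h => hdis y h hy
    have hx'B : x' ∉ B.leaves := hdis x' hx'
    have hx'y : x' ≠ y := fun h => hdis x' hx' (h ▸ hy)
    have hx'y' : x' ≠ y' := fun h => hdis x' hx' (h ▸ hy')
    calc w x y = w x' y := hA x hx x' hx' y hyA
      _ = w y x' := hsymm x' y hx'y
      _ = w y' x' := hB y hy y' hy' x' hx'B
      _ = w x' y' := (hsymm x' y' hx'y').symm
  set c : ℝ := w x0 y0 with hc
  have hc12 : ∀ x ∈ T1.leaves, ∀ y ∈ T2.leaves, w x y = c := fun x hx y hy =>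
    hcc T1 T2 (h2 T1 hm1) (h2 T2 hm2) hd12 x hx y hy x0 hx0 y0 hy0
  have hx0y0 : x0 ≠ y0 := fun h => hd12 x0 hx0 (h ▸ hy0)
  have hDc : D T1.leaves T2.leaves = c :=
    hD _ _ (Finset.disjoint_left.2 fun {a} ha hb => hd12 a ha hb) ⟨x0, hx0⟩ ⟨y0, hy0⟩ c hc12
  -- maximality of c over cross-weights to other clusters
  have hmax1 : ∀ t3 ∈ rest, ∀ x ∈ T1.leaves, ∀ z ∈ t3.leaves, le (w x z) c := by
    intro t3 ht3 x hx z hz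
    obtain ⟨rest0, rfl⟩ := Multiset.exists_cons_of_mem ht3
    have hcc13 : ∀ x' ∈ T1.leaves, ∀ z' ∈ t3.leaves, w x' z' = w x z := fun x' hx' z' hz' =>
      hcc T1 t3 (h2 T1 hm1) (h2 t3 (hmr t3 (Multiset.mem_cons_self _ _)))
        (fun u hu => hd1r t3 (Multiset.mem_cons_self _ _) u hu) x' hx' z' hz' x hx z hz
    have hD13 : D T1.leaves t3.leaves = w x z :=
      hD _ _ (Finset.disjoint_left.2 fun {a} ha hb =>
          hd1r t3 (Multiset.mem_cons_self _ _) a ha hb)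
        ⟨x, hx⟩ ⟨z, hz⟩ _ hcc13
    have heqm : (T1 ::ₘ T2 ::ₘ t3 ::ₘ rest0) = T1 ::ₘ t3 ::ₘ (T2 ::ₘ rest0) :=
      congrArg (T1 ::ₘ ·) (Multiset.cons_swap T2 t3 rest0)
    have := hbest T1 t3 (T2 ::ₘ rest0) heqm
    rw [hDc, hD13] at this
    exact this
  have hmax2 : ∀ t3 ∈ rest, ∀ x ∈ T2.leaves, ∀ z ∈ t3.leaves, le (w x z) c := by
    intro t3 ht3 x hx z hz
    obtain ⟨rest0, rfl⟩ := Multiset.exists_cons_of_mem ht3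
    have hcc23 : ∀ x' ∈ T2.leaves, ∀ z' ∈ t3.leaves, w x' z' = w x z := fun x' hx' z' hz' =>
      hcc T2 t3 (h2 T2 hm2) (h2 t3 (hmr t3 (Multiset.mem_cons_self _ _)))
        (fun u hu => hd2r t3 (Multiset.mem_cons_self _ _) u hu) x' hx' z' hz' x hx z hz
    have hD23 : D T2.leaves t3.leaves = w x z :=
      hD _ _ (Finset.disjoint_left.2 fun {a} ha hb =>
          hd2r t3 (Multiset.mem_cons_self _ _) a ha hb)
        ⟨x, hx⟩ ⟨z, hz⟩ _ hcc23
    have heqm : (T1 ::ₘ T2 ::ₘ t3 ::ₘ rest0) = T2 ::ₘ t3 ::ₘ (T1 ::ₘ rest0) := by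
      rw [Multiset.cons_swap T1 T2]
      exact congrArg (T2 ::ₘ ·) (Multiset.cons_swap T1 t3 rest0)
    have := hbest T2 t3 (T1 ::ₘ rest0) heqm
    rw [hDc, hD23] at this
    exact this
  -- cleanliness of the merged tree
  have hcleannew : CleanT w (ClusterTree.node T1 T2) := by
    intro x hx y hy z hz
    rw [leaves_node] at hx hy hz
    have hz1 : z ∉ T1.leaves := fun h => hz (Finset.mem_union_left _ h)
    have hz2 : z ∉ T2.leaves := fun h => hz (Finset.mem_union_right _ h)
    obtain ⟨t3, ht3, hzt3⟩ := hcover z hz1 hz2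
    have hcross : ∀ u ∈ T1.leaves, ∀ v ∈ T2.leaves, w u z = w v z := by
      intro u hu v hv
      have huv : u ≠ v := fun h => hd12 u hu (h ▸ hv)
      have huz : u ≠ z := fun h => hz1 (h ▸ hu)
      have hvz : v ≠ z := fun h => hz2 (h ▸ hv)
      exact hkey u v z huv huz hvz
        (by rw [hc12 u hu v hv]; exact hmax1 t3 ht3 u hu z hzt3)
        (by rw [hc12 u hu v hv]; exact hmax2 t3 ht3 v hv z hzt3)
    rcases Finset.mem_union.1 hx with hx1 | hx2 <;>
      rcases Finset.mem_union.1 hy with hy1 | hy2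
    · exact h2 T1 hm1 x hx1 y hy1 z hz1
    · exact hcross x hx1 y hy2
    · exact (hcross y hy1 x hx2).symm
    · exact h2 T2 hm2 x hx2 y hy2 z hz2
  refine ⟨?_, ?_, ?_⟩
  -- P1
  · rw [Multiset.cons_bind]
    rw [Multiset.cons_bind, Multiset.cons_bind] at h1
    rw [← h1]
    show ((((T1.leavesList ++ T2.leavesList : List V)) : Multiset V)) + _ = _
    rw [← Multiset.coe_add, add_assoc]
  -- P2
  · intro t ht
    rcases Multiset.mem_cons.1 ht with rfl | ht
    · exact hcleannew
    · exact h2 t (hmr t ht)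
  -- P3
  · intro t ht
    rcases Multiset.mem_cons.1 ht with rfl | ht
    swap
    · exact h3 t (hmr t ht)
    obtain ⟨W1, A1, B1, C1, D1⟩ := h3 T1 hm1
    obtain ⟨W2, A2, B2, C2, D2⟩ := h3 T2 hm2
    set W' : ClusterTree V → ℝ := fun s =>
      if IsSubtreeOf s T1 then W1 s else if IsSubtreeOf s T2 then W2 s else c with hW'
    have hsub_not : ∀ s : ClusterTree V, IsSubtreeOf s T1 → ¬ IsSubtreeOf s T2 := by
      intro s hs1 hs2
      obtain ⟨v, hv⟩ := leaves_nonempty s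
      exact hd12 v (subtree_leaves_subset hs1 hv) (subtree_leaves_subset hs2 hv)
    have hW'1 : ∀ s, IsSubtreeOf s T1 → W' s = W1 s := fun s hs => if_pos hs
    have hW'2 : ∀ s, IsSubtreeOf s T2 → W' s = W2 s := fun s hs => by
      rw [hW']
      simp only
      rw [if_neg (fun h => hsub_not s h hs), if_pos hs]
    have hroot_not1 : ¬ IsSubtreeOf (ClusterTree.node T1 T2) T1 := by
      intro h
      refine hd12 y0 (subtree_leaves_subset h ?_) hy0
      rw [leaves_node]; exact Finset.mem_union_right _ hy0
    have hroot_not2 : ¬ IsSubtreeOf (ClusterTree.node T1 T2) T2 := by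
      intro h
      refine hd21 x0 (subtree_leaves_subset h ?_) hx0
      rw [leaves_node]; exact Finset.mem_union_left _ hx0
    have hW'root : W' (ClusterTree.node T1 T2) = c := by
      rw [hW']
      simp only
      rw [if_neg hroot_not1, if_neg hroot_not2]
    have hcases : ∀ s, IsSubtreeOf s (ClusterTree.node T1 T2) →
        s = ClusterTree.node T1 T2 ∨ IsSubtreeOf s T1 ∨ IsSubtreeOf s T2 := fun s h => h
    have hy0n1 : y0 ∉ T1.leaves := hd21 y0 hy0
    have hx0n2 : x0 ∉ T2.leaves := hd12 x0 hx0
    refine ⟨W', ?_, ?_, ?_, ?_⟩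
    -- (A) nonnegativity
    · intro s hs
      rcases hcases s hs with rfl | hs | hs
      · rw [hW'root]; exact hnn x0 y0 hx0y0
      · rw [hW'1 s hs]; exact A1 s hs
      · rw [hW'2 s hs]; exact A2 s hs
    -- (B) monotonicity
    · intro L R hLR s hs
      rcases hcases _ hLR with heq | hLR1 | hLR2
      · obtain ⟨rfl, rfl⟩ : L = T1 ∧ R = T2 := by
          injection heq with h1' h2'; exact ⟨h1', h2'⟩
        rw [hW'root]
        rcases hs with hs | hs
        · rw [hW'1 s hs]
          exact D1 s hs x0 hx0 y0 hy0n1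
        · rw [hW'2 s hs]
          have := D2 s hs y0 hy0 x0 hx0n2
          rwa [← hsymm x0 y0 hx0y0] at this
      · have hsT1 : IsSubtreeOf s T1 :=
          subtree_trans (show IsSubtreeOf s (ClusterTree.node L R) from Or.inr hs) hLR1
        rw [hW'1 _ hLR1, hW'1 s hsT1]
        exact B1 L R hLR1 s hs
      · have hsT2 : IsSubtreeOf s T2 :=
          subtree_trans (show IsSubtreeOf s (ClusterTree.node L R) from Or.inr hs) hLR2
        rw [hW'2 _ hLR2, hW'2 s hsT2]
        exact B2 L R hLR2 s hs
    -- (C) LCA realization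
    · intro x y hx hy hxy
      rw [leaves_node] at hx hy
      show w x y = W' (if x ∈ T1.leaves ∧ y ∈ T1.leaves then lcaSubtree T1 x y
        else if x ∈ T2.leaves ∧ y ∈ T2.leaves then lcaSubtree T2 x y
        else ClusterTree.node T1 T2)
      by_cases h11 : x ∈ T1.leaves ∧ y ∈ T1.leaves
      · rw [if_pos h11, hW'1 _ (lca_isSubtree T1 x y)]
        exact C1 x y h11.1 h11.2 hxy
      · rw [if_neg h11]
        by_cases h22 : x ∈ T2.leaves ∧ y ∈ T2.leaves
        · rw [if_pos h22, hW'2 _ (lca_isSubtree T2 x y)]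
          exact C2 x y h22.1 h22.2 hxy
        · rw [if_neg h22, hW'root]
          rcases Finset.mem_union.1 hx with hx1 | hx2 <;>
            rcases Finset.mem_union.1 hy with hy1 | hy2
          · exact absurd ⟨hx1, hy1⟩ h11
          · exact hc12 x hx1 y hy2
          · rw [hsymm x y hxy]; exact hc12 y hy1 x hx2
          · exact absurd ⟨hx2, hy2⟩ h22
    -- (D) external domination
    · intro s hs x hx z hz
      rw [leaves_node] at hx hz
      have hz1 : z ∉ T1.leaves := fun h => hz (Finset.mem_union_left _ h)
      have hz2 : z ∉ T2.leaves := fun h => hz (Finset.mem_union_right _ h)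
      obtain ⟨t3, ht3, hzt3⟩ := hcover z hz1 hz2
      have hwle : le (w x z) c := by
        rcases Finset.mem_union.1 hx with hx1 | hx2
        · exact hmax1 t3 ht3 x hx1 z hzt3
        · exact hmax2 t3 ht3 x hx2 z hzt3
      rcases hcases s hs with rfl | hs1 | hs2
      · rw [hW'root]; exact hwle
      · rw [hW'1 s hs1]
        rcases Finset.mem_union.1 hx with hx1 | hx2
        · exact D1 s hs1 x hx1 z hz1
        · have heq : w x z = w x0 z := hcleannew x (by rw [leaves_node]; exact hx)
            x0 (by rw [leaves_node]; exact Finset.mem_union_left _ hx0)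
            z (by rw [leaves_node]; exact hz)
          rw [heq]
          exact D1 s hs1 x0 hx0 z hz1
      · rw [hW'2 s hs2]
        rcases Finset.mem_union.1 hx with hx1 | hx2
        · have heq : w x z = w y0 z := hcleannew x (by rw [leaves_node]; exact hx)
            y0 (by rw [leaves_node]; exact Finset.mem_union_right _ hy0)
            z (by rw [leaves_node]; exact hz)
          rw [heq]
          exact D2 s hs2 y0 hy0 z hz2
        · exact D2 s hs2 x hx2 z hz2

end Main2

section Main3

variable [Fintype V] [DecidableEq V]

lemma linkage_main (w : V → V → ℝ) (le : ℝ → ℝ → Prop)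
    (htot : ∀ a b : ℝ, le a b ∨ le b a) (htr : ∀ a b c : ℝ, le a b → le b c → le a c)
    (hsymm : ∀ x y : V, x ≠ y → w x y = w y x) (hnn : ∀ x y : V, x ≠ y → 0 ≤ w x y)
    (hkey : ∀ x y z : V, x ≠ y → x ≠ z → y ≠ z →
      le (w x z) (w x y) → le (w y z) (w x y) → w x z = w y z)
    (D : Finset V → Finset V → ℝ)
    (hD : ∀ A B : Finset V, Disjoint A B → A.Nonempty → B.Nonempty →
      ∀ c : ℝ, (∀ x ∈ A, ∀ y ∈ B, w x y = c) → D A B = c)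
    (T : ClusterTree V) (hT : IsLinkageOutput D (fun a b => le b a) T) :
    IsClusterTree T ∧ ∃ W, GoodW w le T W := by
  have mono : ∀ {a b : Multiset (ClusterTree V)},
      Relation.ReflTransGen (MergeStep D (fun a b => le b a)) a b →
      LinkInv w le a → LinkInv w le b := by
    intro a b h
    induction h with
    | refl => exact id
    | tail _ hstep ih =>
        exact fun hi => linkInv_step w le hsymm hnn hkey D hD hstep (ih hi)
  have hfin : LinkInv w le ({T} : Multiset (ClusterTree V)) :=
    mono hT (linkInv_init w le htot htr hnn)
  obtain ⟨hP1, _, hP3⟩ := hfin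
  rw [Multiset.singleton_bind] at hP1
  have hnodup : T.leavesList.Nodup := by
    have h := Finset.univ.nodup (α := V)
    rw [← hP1] at h
    exact Multiset.coe_nodup.1 h
  have hleaves : T.leaves = Finset.univ := by
    ext v
    simp only [Finset.mem_univ, iff_true]
    have hv : v ∈ ((T.leavesList : List V) : Multiset V) := by
      rw [hP1]; exact Finset.mem_val.mpr (Finset.mem_univ v)
    exact (mem_leaves_iff T v).2 (Multiset.mem_coe.1 hv)
  exact ⟨⟨hnodup, hleaves⟩, hP3 T (Multiset.mem_singleton_self T)⟩

lemma avg_faithful (w : V → V → ℝ) :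
    ∀ A B : Finset V, Disjoint A B → A.Nonempty → B.Nonempty →
      ∀ c : ℝ, (∀ x ∈ A, ∀ y ∈ B, w x y = c) → avgDist w A B = c := by
  intro A B _ hA hB c hc
  have hcut : cutWeight w A B = (A.card : ℝ) * ((B.card : ℝ) * c) := by
    unfold cutWeight
    rw [Finset.sum_congr rfl fun a ha =>
      Finset.sum_congr rfl fun b hb => hc a ha b hb]
    simp [Finset.sum_const, nsmul_eq_mul]
  have hA0 : (A.card : ℝ) ≠ 0 := Nat.cast_ne_zero.2 (Finset.card_ne_zero_of_mem hA.choose_spec)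
  have hB0 : (B.card : ℝ) ≠ 0 := Nat.cast_ne_zero.2 (Finset.card_ne_zero_of_mem hB.choose_spec)
  rw [avgDist, hcut]
  field_simp

lemma img_singleton (w : V → V → ℝ) (A B : Finset V) (hA : A.Nonempty) (hB : B.Nonempty)
    (c : ℝ) (hc : ∀ x ∈ A, ∀ y ∈ B, w x y = c) :
    ((A ×ˢ B).image fun p => w p.1 p.2) = {c} := by
  ext r
  simp only [Finset.mem_image, Finset.mem_singleton, Finset.mem_product]
  constructor
  · rintro ⟨⟨a, b⟩, ⟨ha, hb⟩, rfl⟩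
    exact hc a ha b hb
  · rintro rfl
    exact ⟨(hA.choose, hB.choose), ⟨hA.choose_spec, hB.choose_spec⟩,
      hc _ hA.choose_spec _ hB.choose_spec⟩

lemma min_faithful (w : V → V → ℝ) :
    ∀ A B : Finset V, Disjoint A B → A.Nonempty → B.Nonempty →
      ∀ c : ℝ, (∀ x ∈ A, ∀ y ∈ B, w x y = c) → minLinkDist w A B = c := by
  intro A B _ hA hB c hc
  rw [minLinkDist, img_singleton w A B hA hB c hc]
  simp

lemma max_faithful (w : V → V → ℝ) :
    ∀ A B : Finset V, Disjoint A B → A.Nonempty → B.Nonempty →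
      ∀ c : ℝ, (∀ x ∈ A, ∀ y ∈ B, w x y = c) → maxLinkDist w A B = c := by
  intro A B _ hA hB c hc
  rw [maxLinkDist, img_singleton w A B hA hB c hc]
  simp

end Main3

section Props

variable {V : Type}

lemma sim_props (w : V → V → ℝ) (h : GeneratedFromUltrametric w) :
    (∀ x y : V, x ≠ y → w x y = w y x) ∧ (∀ x y : V, x ≠ y → 0 ≤ w x y) ∧
    (∀ x y z : V, x ≠ y → x ≠ z → y ≠ z →
      w x z ≤ w x y → w y z ≤ w x y → w x z = w y z) := by
  obtain ⟨d, f, ⟨hd0, hdsep, hdsymm, hdnn, hdult⟩, hf, hfnn, hw⟩ := h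
  have hmin : ∀ x y z : V, x ≠ y → x ≠ z → y ≠ z → min (w x z) (w y z) ≤ w x y := by
    intro x y z hxy hxz hyz
    rw [hw x y hxy, hw x z hxz, hw y z hyz]
    have h2 : f (max (d x z) (d y z)) ≤ f (d x y) :=
      hf _ _ (hdnn x y) (hdult x y z)
    refine le_trans ?_ h2
    rcases le_total (d x z) (d y z) with h | h
    · rw [max_eq_right h]; exact min_le_right _ _
    · rw [max_eq_left h]; exact min_le_left _ _
  refine ⟨fun x y hxy => by rw [hw x y hxy, hw y x (Ne.symm hxy), hdsymm],
    fun x y hxy => by rw [hw x y hxy]; exact hfnn _ (hdnn x y), ?_⟩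
  intro x y z hxy hxz hyz h1 h2
  have hsymm : ∀ a b : V, a ≠ b → w a b = w b a := fun a b hab => by
    rw [hw a b hab, hw b a (Ne.symm hab), hdsymm]
  have ha := hmin x z y hxz hxy (fun h => hyz h.symm)
  rw [hsymm z y (fun h => hyz h.symm)] at ha
  have ha' : w y z ≤ w x z := by
    rw [min_eq_right h2] at ha; exact ha
  have hb := hmin y z x hyz (fun h => hxy h.symm) (Ne.symm hxz)
  rw [hsymm y x (fun h => hxy h.symm), hsymm z x (Ne.symm hxz)] at hb
  have hb' : w x z ≤ w y z := by
    rw [min_eq_right h1] at hb; exact hb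
  exact le_antisymm hb' ha'

lemma dissim_props (w : V → V → ℝ) (h : GeneratedFromUltrametricDissim w) :
    (∀ x y : V, x ≠ y → w x y = w y x) ∧ (∀ x y : V, x ≠ y → 0 ≤ w x y) ∧
    (∀ x y z : V, x ≠ y → x ≠ z → y ≠ z →
      w x y ≤ w x z → w x y ≤ w y z → w x z = w y z) := by
  obtain ⟨d, f, ⟨hd0, hdsep, hdsymm, hdnn, hdult⟩, hf, hfnn, hw⟩ := h
  have hmax : ∀ x y z : V, x ≠ y → x ≠ z → y ≠ z → w x y ≤ max (w x z) (w y z) := by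
    intro x y z hxy hxz hyz
    rw [hw x y hxy, hw x z hxz, hw y z hyz]
    have h2 : f (d x y) ≤ f (max (d x z) (d y z)) :=
      hf _ _ (hdnn x y) (hdult x y z)
    refine le_trans h2 ?_
    rcases le_total (d x z) (d y z) with h | h
    · rw [max_eq_right h]
      exact le_max_of_le_right le_rfl
    · rw [max_eq_left h]
      exact le_max_of_le_left le_rfl
  refine ⟨fun x y hxy => by rw [hw x y hxy, hw y x (Ne.symm hxy), hdsymm],
    fun x y hxy => by rw [hw x y hxy]; exact hfnn _ (hdnn x y), ?_⟩
  intro x y z hxy hxz hyz h1 h2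
  have hsymm : ∀ a b : V, a ≠ b → w a b = w b a := fun a b hab => by
    rw [hw a b hab, hw b a (Ne.symm hab), hdsymm]
  have ha := hmax x z y hxz hxy (fun h => hyz h.symm)
  rw [hsymm z y (fun h => hyz h.symm)] at ha
  have ha' : w x z ≤ w y z := by
    rw [max_eq_right h2] at ha; exact ha
  have hb := hmax y z x hyz (fun h => hxy h.symm) (Ne.symm hxz)
  rw [hsymm y x (fun h => hxy h.symm), hsymm z x (Ne.symm hxz)] at hb
  have hb' : w y z ≤ w x z := by
    rw [max_eq_right h1] at hb; exact hb
  exact le_antisymm ha' hb'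

lemma toMinimal [DecidableEq V] (w : V → V → ℝ) (h : GeneratedFromUltrametric w) :
    GeneratedFromMinimalUltrametric w := by
  obtain ⟨d, f, ⟨hd0, hdsep, hdsymm, hdnn, hdult⟩, hf, hfnn, hw⟩ := h
  classical
  set d' : V → V → ℝ := fun x y => if x = y then 0 else 1 + (f 0 - f (d x y)) with hd'
  set f' : ℝ → ℝ := fun t => max (f 0 + 1 - t) 0 with hf'
  have hfd : ∀ x y : V, f (d x y) ≤ f 0 := fun x y => hf 0 _ le_rfl (hdnn x y)
  have hfd0 : ∀ x y : V, 0 ≤ f (d x y) := fun x y => hfnn _ (hdnn x y)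
  have hval : ∀ x y : V, x ≠ y → d' x y = 1 + (f 0 - f (d x y)) := fun x y h => if_neg h
  have hrefl : ∀ x, d' x x = 0 := fun x => if_pos rfl
  have hnn' : ∀ x y : V, 0 ≤ d' x y := by
    intro x y
    by_cases h : x = y
    · rw [h, hrefl]
    · rw [hval x y h]; have := hfd x y; linarith
  have hsym' : ∀ x y : V, d' x y = d' y x := by
    intro x y
    by_cases h : x = y
    · rw [h]
    · rw [hval x y h, hval y x (Ne.symm h), hdsymm]
  have hsep : ∀ x y : V, d' x y = 0 → x = y := by
    intro x y hxy
    by_contra hne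
    rw [hval x y hne] at hxy
    have := hfd x y
    linarith
  have hultra : ∀ x y z : V, d' x y ≤ max (d' x z) (d' y z) := by
    intro x y z
    by_cases hxy : x = y
    · rw [hxy, hrefl]
      exact le_max_of_le_left (hnn' y z)
    by_cases hxz : x = z
    · rw [← hxz, hsym' y x]
      exact le_max_of_le_right le_rfl
    by_cases hyz : y = z
    · rw [← hyz]
      exact le_max_of_le_left le_rfl
    · rw [hval x y hxy, hval x z hxz, hval y z hyz]
      have h1 : f (max (d x z) (d y z)) ≤ f (d x y) :=
        hf _ _ (hdnn x y) (hdult x y z)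
      rcases le_total (d x z) (d y z) with h | h
      · rw [max_eq_right h] at h1
        exact le_max_of_le_right (by linarith)
      · rw [max_eq_left h] at h1
        exact le_max_of_le_left (by linarith)
  have hfval : ∀ x y : V, x ≠ y → f' (d' x y) = f (d x y) := by
    intro x y h
    rw [hval x y h, hf']
    have e : f 0 + 1 - (1 + (f 0 - f (d x y))) = f (d x y) := by ring
    simp only
    rw [e, max_eq_left (hfd0 x y)]
  refine ⟨d', f', ⟨hrefl, hsep, hsym', hnn', hultra⟩, ?_, ?_, ?_, ?_⟩
  · intro a b _ hab
    rw [hf']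
    exact max_le_max (by linarith) le_rfl
  · intro a _; rw [hf']; exact le_max_right _ _
  · intro x y hxy
    rw [hw x y hxy, hfval x y hxy]
  · intro u v u' v' huv hu'v' heq
    rw [hfval u v huv, hfval u' v' hu'v'] at heq
    rw [hval u v huv, hval u' v' hu'v', heq]

lemma toMinimalDissim [DecidableEq V] (w : V → V → ℝ) (h : GeneratedFromUltrametricDissim w) :
    GeneratedFromMinimalUltrametricDissim w := by
  obtain ⟨d, f, ⟨hd0, hdsep, hdsymm, hdnn, hdult⟩, hf, hfnn, hw⟩ := h
  classical
  set d' : V → V → ℝ := fun x y => if x = y then 0 else 1 + (f (d x y) - f 0) with hd'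
  set f' : ℝ → ℝ := fun t => max (f 0 + (t - 1)) 0 with hf'
  have hfd : ∀ x y : V, f 0 ≤ f (d x y) := fun x y => hf 0 _ le_rfl (hdnn x y)
  have hfd0 : ∀ x y : V, 0 ≤ f (d x y) := fun x y => hfnn _ (hdnn x y)
  have hval : ∀ x y : V, x ≠ y → d' x y = 1 + (f (d x y) - f 0) := fun x y h => if_neg h
  have hrefl : ∀ x, d' x x = 0 := fun x => if_pos rfl
  have hnn' : ∀ x y : V, 0 ≤ d' x y := by
    intro x y
    by_cases h : x = y
    · rw [h, hrefl]
    · rw [hval x y h]; have := hfd x y; linarith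
  have hsym' : ∀ x y : V, d' x y = d' y x := by
    intro x y
    by_cases h : x = y
    · rw [h]
    · rw [hval x y h, hval y x (Ne.symm h), hdsymm]
  have hsep : ∀ x y : V, d' x y = 0 → x = y := by
    intro x y hxy
    by_contra hne
    rw [hval x y hne] at hxy
    have := hfd x y
    linarith
  have hultra : ∀ x y z : V, d' x y ≤ max (d' x z) (d' y z) := by
    intro x y z
    by_cases hxy : x = y
    · rw [hxy, hrefl]
      exact le_max_of_le_left (hnn' y z)
    by_cases hxz : x = z
    · rw [← hxz, hsym' y x]
      exact le_max_of_le_right le_rfl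
    by_cases hyz : y = z
    · rw [← hyz]
      exact le_max_of_le_left le_rfl
    · rw [hval x y hxy, hval x z hxz, hval y z hyz]
      have h1 : f (d x y) ≤ f (max (d x z) (d y z)) :=
        hf _ _ (hdnn x y) (hdult x y z)
      rcases le_total (d x z) (d y z) with h | h
      · rw [max_eq_right h] at h1
        exact le_max_of_le_right (by linarith)
      · rw [max_eq_left h] at h1
        exact le_max_of_le_left (by linarith)
  have hfval : ∀ x y : V, x ≠ y → f' (d' x y) = f (d x y) := by
    intro x y h
    rw [hval x y h, hf']
    have e : f 0 + (1 + (f (d x y) - f 0) - 1) = f (d x y) := by ring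
    simp only
    rw [e, max_eq_left (hfd0 x y)]
  refine ⟨d', f', ⟨hrefl, hsep, hsym', hnn', hultra⟩, ?_, ?_, ?_, ?_⟩
  · intro a b _ hab
    rw [hf']
    exact max_le_max (by linarith) le_rfl
  · intro a _; rw [hf']; exact le_max_right _ _
  · intro x y hxy
    rw [hw x y hxy, hfval x y hxy]
  · intro u v u' v' huv hu'v' heq
    rw [hfval u v huv, hfval u' v' hu'v'] at heq
    rw [hval u v huv, hval u' v' hu'v', heq]

end Props


end Statement10Aux

end Statement10Aux


/-- Theorem 8, CKMM: on ground-truth inputs, average-, single- and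
complete-linkage return generating trees — hence optimal solutions for every
admissible objective function — regardless of tie-breaking, in both the similarity
and the dissimilarity settings. -/
theorem statement10 {V : Type} [Fintype V] [DecidableEq V] (w : V → V → ℝ) :
    (GeneratedFromUltrametric w →
      ∀ T : ClusterTree V,
        (IsLinkageOutput (avgDist w) (fun a b => b ≤ a) T ∨
          IsLinkageOutput (minLinkDist w) (fun a b => b ≤ a) T ∨
          IsLinkageOutput (maxLinkDist w) (fun a b => b ≤ a) T) →
        IsClusterTree T ∧ IsGenerating w T ∧
          ∀ g : ℕ → ℕ → ℝ, Admissible g →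
            ∀ T' : ClusterTree V, IsClusterTree T' →
              treeCost w g T ≤ treeCost w g T') ∧
    (GeneratedFromUltrametricDissim w →
      ∀ T : ClusterTree V,
        (IsLinkageOutput (avgDist w) (fun a b => a ≤ b) T ∨
          IsLinkageOutput (minLinkDist w) (fun a b => a ≤ b) T ∨
          IsLinkageOutput (maxLinkDist w) (fun a b => a ≤ b) T) →
        IsClusterTree T ∧ IsGeneratingDissim w T ∧
          ∀ g : ℕ → ℕ → ℝ, AdmissibleDissim g →
            ∀ T' : ClusterTree V, IsClusterTree T' →
              treeCost w g T' ≤ treeCost w g T) := by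
  constructor
  · intro hGT T hT
    obtain ⟨hsymm, hnn, hkey⟩ := Statement10Aux.sim_props w hGT
    have hmain : IsClusterTree T ∧
        ∃ W, Statement10Aux.GoodW w (fun a b => a ≤ b) T W := by
      rcases hT with h | h | h
      · exact Statement10Aux.linkage_main w (fun a b => a ≤ b) le_total
          (fun a b c => le_trans) hsymm hnn hkey _ (Statement10Aux.avg_faithful w) T h
      · exact Statement10Aux.linkage_main w (fun a b => a ≤ b) le_total
          (fun a b c => le_trans) hsymm hnn hkey _ (Statement10Aux.min_faithful w) T h
      · exact Statement10Aux.linkage_main w (fun a b => a ≤ b) le_total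
          (fun a b c => le_trans) hsymm hnn hkey _ (Statement10Aux.max_faithful w) T h
    obtain ⟨hCT, W, hA, hB, hC, _⟩ := hmain
    have hGen : IsGenerating w T := ⟨W, hA, hB, hC⟩
    refine ⟨hCT, hGen, ?_⟩
    intro g hg T' hT'
    exact ((hg V w (Statement10Aux.toMinimal w hGT) T hCT).2 hGen) T' hT'
  · intro hGT T hT
    obtain ⟨hsymm, hnn, hkey⟩ := Statement10Aux.dissim_props w hGT
    have hmain : IsClusterTree T ∧
        ∃ W, Statement10Aux.GoodW w (fun a b => b ≤ a) T W := by
      rcases hT with h | h | h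
      · exact Statement10Aux.linkage_main w (fun a b => b ≤ a) (fun a b => le_total b a)
          (fun a b c hab hbc => le_trans hbc hab) hsymm hnn hkey _
          (Statement10Aux.avg_faithful w) T h
      · exact Statement10Aux.linkage_main w (fun a b => b ≤ a) (fun a b => le_total b a)
          (fun a b c hab hbc => le_trans hbc hab) hsymm hnn hkey _
          (Statement10Aux.min_faithful w) T h
      · exact Statement10Aux.linkage_main w (fun a b => b ≤ a) (fun a b => le_total b a)
          (fun a b c hab hbc => le_trans hbc hab) hsymm hnn hkey _
          (Statement10Aux.max_faithful w) T h
    obtain ⟨hCT, W, hA, hB, hC, _⟩ := hmain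
    have hGen : IsGeneratingDissim w T := ⟨W, hA, hB, hC⟩
    refine ⟨hCT, hGen, ?_⟩
    intro g hg T' hT'
    exact ((hg V w (Statement10Aux.toMinimalDissim w hGT) T hCT).2 hGen) T' hT'
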